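/- (Reduction of the search interval.) Let n > 0, x_B > 0 and 0 < Γ_B < Γ_A, and set D = 1 + (Γ_B/Γ_A)^{1/n}. Then 1 < D < 2, so that x_B/2 < x_B/D < x_B and the interval (x_B/D, x_B/2] is empty; moreover, for every x ∈ (x_B/2, x_B/D] and every Γ_R > 0, min{log₂(1+Γ_A·x^{−n}), log₂(1+Γ_B·(x_B−x)^{−n})} = log₂(1+Γ_B·(x_B−x)^{−n}) and min{log₂(1+Γ_R·x^{−n}), log₂(1+Γ_R·(x_B−x)^{−n})} = log₂(1+Γ_R·x^{−n}), so the overall PNC-B rate on this interval equals R_{BR}(x)·R_{RA}(x)/(R_{BR}(x)+R_{RA}(x)) with R_{BR}(x) = log₂(1+Γ_B·(x_B−x)^{−n}) and R_{RA}(x) = log₂(1+Γ_R·x^{−n}). -/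
import Mathlib

/-- Reduction of the relay search interval: with `0 < Γ_B < Γ_A` and
`D = 1 + (Γ_B/Γ_A)^{1/n}`, one has `1 < D < 2`, hence `x_B/2 < x_B/D < x_B`
and `(x_B/D, x_B/2]` is empty; and on `(x_B/2, x_B/D]` the multiple-access
minimum is the user link rate, the broadcast minimum is the relay→A rate,
and the overall PNC-B rate equals `R_BR·R_RA/(R_BR+R_RA)`. -/
theorem pncb_search_interval_reduction (n xB ΓA ΓB D : ℝ) (hn : 0 < n)
    (hxB : 0 < xB) (hΓB : 0 < ΓB) (hBA : ΓB < ΓA)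
    (hD : D = 1 + (ΓB / ΓA) ^ (1 / n)) :
    (1 < D ∧ D < 2) ∧
    (xB / 2 < xB / D ∧ xB / D < xB) ∧
    Set.Ioc (xB / D) (xB / 2) = (∅ : Set ℝ) ∧
    (∀ x ∈ Set.Ioc (xB / 2) (xB / D), ∀ ΓR : ℝ, 0 < ΓR →
      min (Real.logb 2 (1 + ΓA * x ^ (-n))) (Real.logb 2 (1 + ΓB * (xB - x) ^ (-n)))
        = Real.logb 2 (1 + ΓB * (xB - x) ^ (-n)) ∧
      min (Real.logb 2 (1 + ΓR * x ^ (-n))) (Real.logb 2 (1 + ΓR * (xB - x) ^ (-n)))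
        = Real.logb 2 (1 + ΓR * x ^ (-n)) ∧
      min (Real.logb 2 (1 + ΓA * x ^ (-n))) (Real.logb 2 (1 + ΓB * (xB - x) ^ (-n))) *
          min (Real.logb 2 (1 + ΓR * x ^ (-n))) (Real.logb 2 (1 + ΓR * (xB - x) ^ (-n))) /
          (min (Real.logb 2 (1 + ΓA * x ^ (-n))) (Real.logb 2 (1 + ΓB * (xB - x) ^ (-n))) +
            min (Real.logb 2 (1 + ΓR * x ^ (-n))) (Real.logb 2 (1 + ΓR * (xB - x) ^ (-n))))
        = Real.logb 2 (1 + ΓB * (xB - x) ^ (-n)) * Real.logb 2 (1 + ΓR * x ^ (-n)) /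
          (Real.logb 2 (1 + ΓB * (xB - x) ^ (-n)) + Real.logb 2 (1 + ΓR * x ^ (-n)))) := by
  have hΓA : 0 < ΓA := hΓB.trans hBA
  have hq : 0 < ΓB / ΓA := div_pos hΓB hΓA
  have hq1 : ΓB / ΓA < 1 := (div_lt_one hΓA).mpr hBA
  set r : ℝ := (ΓB / ΓA) ^ (1 / n) with hr
  have hr0 : 0 < r := Real.rpow_pos_of_pos hq _
  have hr1 : r < 1 := Real.rpow_lt_one hq.le hq1 (by positivity)
  have hD1 : 1 < D := by rw [hD]; linarith
  have hD2 : D < 2 := by rw [hD]; linarith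
  have hD0 : 0 < D := by linarith
  have h12 : xB / 2 < xB / D := div_lt_div_of_pos_left hxB hD0 hD2
  have h2 : xB / D < xB := by
    rw [div_lt_iff₀ hD0]; nlinarith
  refine ⟨⟨hD1, hD2⟩, ⟨h12, h2⟩, Set.Ioc_eq_empty (not_lt.mpr h12.le), ?_⟩
  rintro x ⟨hx1, hx2⟩ ΓR hΓR
  have hx0 : 0 < x := lt_trans (by positivity) hx1
  have hxlt : x < xB := lt_of_le_of_lt hx2 h2
  have hxx0 : 0 < xB - x := by linarith
  have hxxlt : xB - x < x := by
    have := (div_lt_iff₀ (by norm_num : (0:ℝ) < 2)).mp hx1; linarith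
  -- key: r * x ≤ xB - x
  have hrx : r * x ≤ xB - x := by
    have : D * x ≤ xB := by
      have := (le_div_iff₀ hD0).mp hx2; linarith
    rw [hD] at this; nlinarith
  -- r ^ (-n) = ΓA / ΓB
  have hrn : r ^ (-n) = ΓA / ΓB := by
    rw [hr, ← Real.rpow_mul hq.le]
    have hne : n ≠ 0 := ne_of_gt hn
    have : 1 / n * (-n) = -1 := by field_simp
    rw [this, Real.rpow_neg_one, inv_div]
  -- first min
  have key1 : ΓB * (xB - x) ^ (-n) ≤ ΓA * x ^ (-n) := by
    have h1 : (xB - x) ^ (-n) ≤ (r * x) ^ (-n) :=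
      Real.rpow_le_rpow_of_nonpos (by positivity) hrx (by linarith)
    have h2 : (r * x) ^ (-n) = (ΓA / ΓB) * x ^ (-n) := by
      rw [Real.mul_rpow hr0.le hx0.le, hrn]
    rw [h2] at h1
    calc ΓB * (xB - x) ^ (-n) ≤ ΓB * ((ΓA / ΓB) * x ^ (-n)) := by
          exact mul_le_mul_of_nonneg_left h1 hΓB.le
      _ = ΓA * x ^ (-n) := by field_simp
  have key2 : ΓR * x ^ (-n) ≤ ΓR * (xB - x) ^ (-n) := by
    have := Real.rpow_le_rpow_of_nonpos hxx0 hxxlt.le (by linarith : -n ≤ 0)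
    exact mul_le_mul_of_nonneg_left this hΓR.le
  have pA : (0:ℝ) < 1 + ΓA * x ^ (-n) := by positivity
  have pB : (0:ℝ) < 1 + ΓB * (xB - x) ^ (-n) := by positivity
  have pR1 : (0:ℝ) < 1 + ΓR * x ^ (-n) := by positivity
  have hb : (1:ℝ) < 2 := one_lt_two
  have m1 : min (Real.logb 2 (1 + ΓA * x ^ (-n))) (Real.logb 2 (1 + ΓB * (xB - x) ^ (-n)))
      = Real.logb 2 (1 + ΓB * (xB - x) ^ (-n)) :=
    min_eq_right (Real.logb_le_logb_of_le hb pB (by linarith))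
  have m2 : min (Real.logb 2 (1 + ΓR * x ^ (-n))) (Real.logb 2 (1 + ΓR * (xB - x) ^ (-n)))
      = Real.logb 2 (1 + ΓR * x ^ (-n)) :=
    min_eq_left (Real.logb_le_logb_of_le hb pR1 (by linarith))
  exact ⟨m1, m2, by rw [m1, m2]⟩
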